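/- Let R be a rectangle of the vertical decomposition of an orthogonal polygon, and let S be a tall left neighbor of R (S covers a strictly larger interval of y-coordinates than R along their shared vertical). Then S is the only left neighbor of R. -/
import Mathlib


open Set

/-- In the vertical decomposition, model the left side of rectangle `R` as the
y-interval `(l, u)` and its left neighbors by their y-spans `(c i, d i)`: each
neighbor's span meets `(l, u)`, and distinct neighbors have disjoint open
spans.  If a neighbor `s` is tall (its span strictly contains `[l, u]`), then
`s` is the only left neighbor of `R`. -/
theorem tall_neighbor_is_only_neighbor {ι : Type*} [DecidableEq ι]
    (N : Finset ι) (c d : ι → ℝ) (l u : ℝ) (hlu : l < u)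
    (hcd : ∀ i ∈ N, c i < d i)
    (hmeet : ∀ i ∈ N, (Ioo (c i) (d i) ∩ Ioo l u).Nonempty)
    (hdisj : ∀ i ∈ N, ∀ j ∈ N, i ≠ j → Disjoint (Ioo (c i) (d i)) (Ioo (c j) (d j)))
    (s : ι) (hs : s ∈ N) (htall : c s < l ∧ u < d s) :
    N = {s} := by
  ext i
  simp only [Finset.mem_singleton]
  constructor
  · intro hi
    by_contra hne
    obtain ⟨x, hx1, hx2⟩ := hmeet i hi
    have hxs : x ∈ Ioo (c s) (d s) :=
      ⟨htall.1.trans hx2.1, hx2.2.trans htall.2⟩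
    exact (hdisj i hi s hs hne).le_bot ⟨hx1, hxs⟩
  · rintro rfl; exact hs
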